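/- Let (Ω, μ) be a measure space and A ⊆ Ω measurable with μ(A) ≠ 0. Let p₁, p₂ : Ω → [0,∞) be measurable, integrable, and suppose p₁(x) + p₂(x) > 0 for μ-a.e. x ∈ A. Let φ : [0,∞)² → [0,∞) be continuous, concave, strictly increasing in each coordinate, with φ(0,0)=0 and lim_{t→∞} φ(tz) = ∞ for nonzero z. Write S = ∫_A +̃_φ(p₁, p₂) dμ, P₁ = ∫_A p₁ dμ, P₂ = ∫_A p₂ dμ. Then 0 < S < ∞ and φ(P₁/S, P₂/S) ≥ 1. -/

import Mathlib

open Filter Set MeasureTheory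
open scoped Topology NNReal ENNReal

/-- The Orlicz addition of two nonnegative numbers: the unique `λ > 0` with
`φ(a/λ, b/λ) = 1` when `a + b > 0`, and `0` when `a = b = 0`. -/
noncomputable def orliczAdd (φ : ℝ → ℝ → ℝ) (a b : ℝ) : ℝ :=
  sInf {l : ℝ | 0 < l ∧ φ (a / l) (b / l) = 1}

theorem dual_functional_orlicz_brunn_minkowski_concave
    {Ω : Type*} [MeasurableSpace Ω] (μ : Measure Ω)
    (A : Set Ω) (hA : MeasurableSet A) (hA0 : μ A ≠ 0)
    (p₁ p₂ : Ω → ℝ) (hp₁m : Measurable p₁) (hp₂m : Measurable p₂)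
    (hp₁0 : ∀ x, 0 ≤ p₁ x) (hp₂0 : ∀ x, 0 ≤ p₂ x)
    (hp₁i : Integrable p₁ μ) (hp₂i : Integrable p₂ μ)
    (hpos : ∀ᵐ x ∂(μ.restrict A), 0 < p₁ x + p₂ x)
    (φ : ℝ → ℝ → ℝ)
    (hconc : ConcaveOn ℝ (Set.Ici 0 ×ˢ Set.Ici 0) (fun z : ℝ × ℝ => φ z.1 z.2))
    (hc : ContinuousOn (fun z : ℝ × ℝ => φ z.1 z.2) (Set.Ici 0 ×ˢ Set.Ici 0))
    (hm1 : ∀ y : ℝ, 0 ≤ y → StrictMonoOn (fun x => φ x y) (Set.Ici 0))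
    (hm2 : ∀ x : ℝ, 0 ≤ x → StrictMonoOn (fun y => φ x y) (Set.Ici 0))
    (h0 : φ 0 0 = 0)
    (hlim : ∀ z₁ z₂ : ℝ, 0 ≤ z₁ → 0 ≤ z₂ → (z₁, z₂) ≠ (0, 0) →
      Tendsto (fun t => φ (t * z₁) (t * z₂)) atTop atTop) :
    IntegrableOn (fun x => orliczAdd φ (p₁ x) (p₂ x)) A μ ∧
      0 < ∫ x in A, orliczAdd φ (p₁ x) (p₂ x) ∂μ ∧
      1 ≤ φ ((∫ x in A, p₁ x ∂μ) / ∫ x in A, orliczAdd φ (p₁ x) (p₂ x) ∂μ)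
            ((∫ x in A, p₂ x ∂μ) / ∫ x in A, orliczAdd φ (p₁ x) (p₂ x) ∂μ) := by
  -- monotonicity helpers
  have mono : ∀ x₁ y₁ x₂ y₂ : ℝ, 0 ≤ x₁ → 0 ≤ y₁ → x₁ ≤ x₂ → y₁ ≤ y₂ →
      φ x₁ y₁ ≤ φ x₂ y₂ := by
    intro x₁ y₁ x₂ y₂ hx₁ hy₁ hx hy
    calc φ x₁ y₁ ≤ φ x₂ y₁ := (hm1 y₁ hy₁).monotoneOn hx₁ (hx₁.trans hx) hx
      _ ≤ φ x₂ y₂ := (hm2 x₂ (hx₁.trans hx)).monotoneOn hy₁ (hy₁.trans hy) hy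
  have strict : ∀ x₁ y₁ x₂ y₂ : ℝ, 0 ≤ x₁ → 0 ≤ y₁ → x₁ ≤ x₂ → y₁ ≤ y₂ →
      (x₁ < x₂ ∨ y₁ < y₂) → φ x₁ y₁ < φ x₂ y₂ := by
    rintro x₁ y₁ x₂ y₂ hx₁ hy₁ hx hy (h | h)
    · calc φ x₁ y₁ < φ x₂ y₁ := hm1 y₁ hy₁ hx₁ (hx₁.trans hx) h
        _ ≤ φ x₂ y₂ := (hm2 x₂ (hx₁.trans hx)).monotoneOn hy₁ (hy₁.trans hy) hy
    · calc φ x₁ y₁ ≤ φ x₂ y₁ := (hm1 y₁ hy₁).monotoneOn hx₁ (hx₁.trans hx) hx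
        _ < φ x₂ y₂ := hm2 x₂ (hx₁.trans hx) hy₁ (hy₁.trans hy) h
  -- strict antitonicity of l ↦ φ (a/l) (b/l)
  have anti : ∀ a b l l' : ℝ, 0 ≤ a → 0 ≤ b → 0 < a + b → 0 < l → l < l' →
      φ (a / l') (b / l') < φ (a / l) (b / l) := by
    intro a b l l' ha hb hab hl hll'
    have hl' : 0 < l' := hl.trans hll'
    have hale : a / l' ≤ a / l := by gcongr
    have hble : b / l' ≤ b / l := by gcongr
    refine strict _ _ _ _ (div_nonneg ha hl'.le) (div_nonneg hb hl'.le) hale hble ?_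
    rcases (by rcases ha.lt_or_eq with h | h; exacts [Or.inl h, Or.inr (by linarith)] :
        0 < a ∨ 0 < b) with h | h
    · exact Or.inl (by gcongr)
    · exact Or.inr (by gcongr)
  -- existence and uniqueness of the Orlicz solution
  have key : ∀ a b : ℝ, 0 ≤ a → 0 ≤ b → 0 < a + b →
      ∃ l, (0 < l ∧ φ (a / l) (b / l) = 1) ∧
        ∀ l', (0 < l' ∧ φ (a / l') (b / l') = 1) → l' = l := by
    intro a b ha hb hab
    have hne : ((a, b) : ℝ × ℝ) ≠ (0, 0) := by
      intro h
      have h1 : a = 0 := congrArg Prod.fst h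
      have h2 : b = 0 := congrArg Prod.snd h
      rw [h1, h2] at hab; simp at hab
    have h1 : Tendsto (fun l : ℝ => φ (a / l) (b / l)) (𝓝[>] 0) atTop := by
      have := (hlim a b ha hb hne).comp tendsto_inv_nhdsGT_zero
      refine this.congr fun l => ?_
      simp only [Function.comp_apply, div_eq_inv_mul]
    obtain ⟨l₀, hGl₀, hl₀⟩ :
        ∃ l₀ : ℝ, 2 ≤ φ (a / l₀) (b / l₀) ∧ l₀ ∈ Ioi (0 : ℝ) :=
      ((h1.eventually (eventually_ge_atTop 2)).and self_mem_nhdsWithin).exists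
    have h2 : Tendsto (fun l : ℝ => φ (a / l) (b / l)) atTop (𝓝 0) := by
      have hzero : Tendsto (fun l : ℝ => ((a / l, b / l) : ℝ × ℝ)) atTop
          (𝓝[Set.Ici 0 ×ˢ Set.Ici 0] (0, 0)) := by
        apply tendsto_nhdsWithin_of_tendsto_nhds_of_eventually_within
        · have haa : Tendsto (fun l : ℝ => a / l) atTop (𝓝 0) := by
            simpa using (tendsto_inv_atTop_zero.const_mul a).congr
              (fun l => by rw [div_eq_mul_inv, mul_comm])
          have hbb : Tendsto (fun l : ℝ => b / l) atTop (𝓝 0) := by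
            simpa using (tendsto_inv_atTop_zero.const_mul b).congr
              (fun l => by rw [div_eq_mul_inv, mul_comm])
          exact haa.prodMk_nhds hbb
        · filter_upwards [eventually_gt_atTop (0 : ℝ)] with l hl
          exact ⟨div_nonneg ha hl.le, div_nonneg hb hl.le⟩
      have hmem : (((0 : ℝ), (0 : ℝ)) : ℝ × ℝ) ∈ Set.Ici (0:ℝ) ×ˢ Set.Ici (0:ℝ) := by
        constructor <;> exact Set.mem_Ici.mpr (le_refl 0)
      have := (hc _ hmem).tendsto.comp hzero
      simpa [h0, Function.comp_def] using this
    have hev : ∀ᶠ l in atTop, φ (a / l) (b / l) < 1 :=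
      h2.eventually_lt_const one_pos
    obtain ⟨l₁, hGl₁, hl₁⟩ := (hev.and (eventually_ge_atTop (l₀ + 1))).exists
    have hl₀pos : 0 < l₀ := hl₀
    have hl₀l₁ : l₀ ≤ l₁ := by linarith
    have hcont : ContinuousOn (fun l : ℝ => φ (a / l) (b / l)) (Icc l₀ l₁) := by
      have hin : ContinuousOn (fun l : ℝ => ((a / l, b / l) : ℝ × ℝ)) (Icc l₀ l₁) := by
        apply ContinuousOn.prodMk
        · exact continuousOn_const.div continuousOn_id
            (fun l hl => (hl₀pos.trans_le hl.1).ne')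
        · exact continuousOn_const.div continuousOn_id
            (fun l hl => (hl₀pos.trans_le hl.1).ne')
      refine hc.comp hin fun l hl => ?_
      have hlp : 0 < l := hl₀pos.trans_le hl.1
      exact ⟨div_nonneg ha hlp.le, div_nonneg hb hlp.le⟩
    have hone : (1 : ℝ) ∈ Icc (φ (a / l₁) (b / l₁)) (φ (a / l₀) (b / l₀)) :=
      ⟨hGl₁.le, by linarith⟩
    obtain ⟨lam, hlammem, hlam'⟩ := intermediate_value_Icc' hl₀l₁ hcont hone
    have hlam : φ (a / lam) (b / lam) = 1 := hlam'
    have hlampos : 0 < lam := hl₀pos.trans_le hlammem.1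
    refine ⟨lam, ⟨hlampos, hlam⟩, ?_⟩
    rintro l' ⟨hl'pos, hl'⟩
    rcases lt_trichotomy l' lam with h | h | h
    · have := anti a b l' lam ha hb hab hl'pos h
      rw [hlam, hl'] at this; exact absurd this (lt_irrefl 1)
    · exact h
    · have := anti a b lam l' ha hb hab hlampos h
      rw [hlam, hl'] at this; exact absurd this (lt_irrefl 1)
  -- the defining property of orliczAdd
  have orlicz_spec : ∀ a b : ℝ, 0 ≤ a → 0 ≤ b → 0 < a + b →
      0 < orliczAdd φ a b ∧
        φ (a / orliczAdd φ a b) (b / orliczAdd φ a b) = 1 := by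
    intro a b ha hb hab
    obtain ⟨l, hl, huniq⟩ := key a b ha hb hab
    have hset : {l' : ℝ | 0 < l' ∧ φ (a / l') (b / l') = 1} = {l} :=
      Set.eq_singleton_iff_unique_mem.mpr ⟨hl, huniq⟩
    have hval : orliczAdd φ a b = l := by rw [orliczAdd, hset, csInf_singleton]
    rw [hval]; exact hl
  have orlicz_zero : ∀ a b : ℝ, 0 ≤ a → 0 ≤ b → a + b ≤ 0 → orliczAdd φ a b = 0 := by
    intro a b ha hb hab
    have ha0 : a = 0 := le_antisymm (by linarith) ha
    have hb0 : b = 0 := le_antisymm (by linarith) hb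
    have hset : {l' : ℝ | 0 < l' ∧ φ (a / l') (b / l') = 1} = (∅ : Set ℝ) := by
      ext l
      simp only [Set.mem_setOf_eq, Set.mem_empty_iff_false, iff_false, not_and]
      intro hl
      rw [ha0, hb0, zero_div, h0]
      norm_num
    rw [orliczAdd, hset, Real.sInf_empty]
  have orlicz_nonneg : ∀ a b : ℝ, 0 ≤ orliczAdd φ a b := fun a b =>
    Real.sInf_nonneg fun l hl => hl.1.le
  -- the constant c with φ c c = 1
  obtain ⟨l₁₁, ⟨hl₁₁pos, hl₁₁⟩, -⟩ := key 1 1 zero_le_one zero_le_one (by norm_num)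
  set c : ℝ := 1 / l₁₁ with hcdef
  have hc0 : 0 < c := by positivity
  have hcc : φ c c = 1 := hl₁₁
  -- upper bound
  have bound : ∀ a b : ℝ, 0 ≤ a → 0 ≤ b → orliczAdd φ a b ≤ (a + b) / c := by
    intro a b ha hb
    rcases le_or_gt (a + b) 0 with h | h
    · rw [orlicz_zero a b ha hb h]
      exact div_nonneg (by linarith) hc0.le
    · obtain ⟨hpos', heq⟩ := orlicz_spec a b ha hb h
      set lam := orliczAdd φ a b with hlamdef
      by_contra hcon
      push_neg at hcon
      have hlt : (a + b) / lam < c := by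
        rw [div_lt_iff₀ hpos']
        rw [div_lt_iff₀ hc0] at hcon
        nlinarith
      have h1 : (1 : ℝ) ≤ φ ((a + b) / lam) ((a + b) / lam) := by
        rw [← heq]
        exact mono _ _ _ _ (div_nonneg ha hpos'.le) (div_nonneg hb hpos'.le)
          (by gcongr; linarith) (by gcongr; linarith)
      have h2 : φ ((a + b) / lam) ((a + b) / lam) < φ c c :=
        strict _ _ _ _ (div_nonneg h.le hpos'.le) (div_nonneg h.le hpos'.le)
          hlt.le hlt.le (Or.inl hlt)
      rw [hcc] at h2; linarith
  -- characterization of the sublevel sets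
  have charac : ∀ a b r : ℝ, 0 ≤ a → 0 ≤ b → 0 < a + b → 0 < r →
      (orliczAdd φ a b ≤ r ↔ φ (a / r) (b / r) ≤ 1) := by
    intro a b r ha hb hab hr
    obtain ⟨hpos', heq⟩ := orlicz_spec a b ha hb hab
    set lam := orliczAdd φ a b with hlamdef
    constructor
    · intro hle
      calc φ (a / r) (b / r) ≤ φ (a / lam) (b / lam) :=
            mono _ _ _ _ (div_nonneg ha hr.le) (div_nonneg hb hr.le)
              (by gcongr) (by gcongr)
        _ = 1 := heq
    · intro hle
      by_contra hcon
      push_neg at hcon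
      have := anti a b r lam ha hb hab hr hcon
      rw [heq] at this; linarith
  -- the function f
  set f : Ω → ℝ := fun x => orliczAdd φ (p₁ x) (p₂ x) with hfdef
  have hf0 : ∀ x, 0 ≤ f x := fun x => orlicz_nonneg _ _
  have hfm : Measurable f := by
    apply measurable_of_Iic
    intro r
    rcases lt_trichotomy r 0 with hr | hr | hr
    · have hemp : f ⁻¹' Iic r = ∅ := by
        ext x
        simp only [Set.mem_preimage, Set.mem_Iic, Set.mem_empty_iff_false, iff_false, not_le]
        exact hr.trans_le (hf0 x)
      rw [hemp]; exact MeasurableSet.empty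
    · subst hr
      have heq : f ⁻¹' Iic 0 = {x | p₁ x + p₂ x ≤ 0} := by
        ext x
        simp only [Set.mem_preimage, Set.mem_Iic, Set.mem_setOf_eq]
        constructor
        · intro hle
          by_contra hcon
          push_neg at hcon
          exact absurd (le_antisymm hle (hf0 x))
            (orlicz_spec _ _ (hp₁0 x) (hp₂0 x) hcon).1.ne'
        · intro hle
          rw [show f x = 0 from orlicz_zero _ _ (hp₁0 x) (hp₂0 x) hle]
      rw [heq]
      exact measurableSet_le (hp₁m.add hp₂m) measurable_const
    · have heq : f ⁻¹' Iic r = {x | φ (p₁ x / r) (p₂ x / r) ≤ 1} := by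
        ext x
        simp only [Set.mem_preimage, Set.mem_Iic, Set.mem_setOf_eq]
        rcases le_or_gt (p₁ x + p₂ x) 0 with h | h
        · have h1 : p₁ x = 0 := le_antisymm (by linarith [hp₂0 x]) (hp₁0 x)
          have h2 : p₂ x = 0 := le_antisymm (by linarith [hp₁0 x]) (hp₂0 x)
          rw [show f x = 0 from orlicz_zero _ _ (hp₁0 x) (hp₂0 x) h, h1, h2, zero_div, h0]
          simp [hr.le]
        · exact charac _ _ r (hp₁0 x) (hp₂0 x) h hr
      rw [heq]
      have hq : Measurable fun x => ((p₁ x / r, p₂ x / r) : ℝ × ℝ) :=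
        (hp₁m.div_const r).prodMk (hp₂m.div_const r)
      have hψ : Measurable ((Set.Ici (0:ℝ) ×ˢ Set.Ici (0:ℝ)).restrict
          fun z : ℝ × ℝ => φ z.1 z.2) :=
        (continuousOn_iff_continuous_restrict.mp hc).measurable
      have hmemq : ∀ x, ((p₁ x / r, p₂ x / r) : ℝ × ℝ) ∈
          Set.Ici (0:ℝ) ×ˢ Set.Ici (0:ℝ) := fun x =>
        ⟨div_nonneg (hp₁0 x) hr.le, div_nonneg (hp₂0 x) hr.le⟩
      have h1 : Measurable fun x => ((⟨(p₁ x / r, p₂ x / r), hmemq x⟩ :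
          (Set.Ici (0:ℝ) ×ˢ Set.Ici (0:ℝ) : Set (ℝ × ℝ)))) := hq.subtype_mk
      have hcomp : Measurable fun x => φ (p₁ x / r) (p₂ x / r) := hψ.comp h1
      exact hcomp measurableSet_Iic
  -- integrability
  have hfi : IntegrableOn f A μ := by
    refine Integrable.mono' (((hp₁i.add hp₂i).div_const c).integrableOn)
      hfm.aestronglyMeasurable (ae_of_all _ fun x => ?_)
    rw [Real.norm_eq_abs, abs_of_nonneg (hf0 x)]
    exact bound _ _ (hp₁0 x) (hp₂0 x)
  refine ⟨hfi, ?_⟩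
  -- positivity of the integral
  have hfposA : ∀ᵐ x ∂μ.restrict A, 0 < f x :=
    hpos.mono fun x hx => (orlicz_spec _ _ (hp₁0 x) (hp₂0 x) hx).1
  set S := ∫ x in A, f x ∂μ with hSdef
  have hS : 0 < S := by
    rw [hSdef, setIntegral_pos_iff_support_of_nonneg_ae (ae_of_all _ hf0) hfi]
    have hsupp : ∀ᵐ x ∂μ.restrict A, x ∈ Function.support f :=
      hfposA.mono fun x hx => hx.ne'
    have hmeas : MeasurableSet (Function.support f) :=
      hfm (measurableSet_singleton 0).compl
    have h1 : μ.restrict A (Function.support f)ᶜ = 0 := ae_iff.mp hsupp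
    have h2 : μ A ≤ μ (Function.support f ∩ A) := by
      have h3 := measure_union_le (μ := μ.restrict A)
        (Function.support f) (Function.support f)ᶜ
      rw [Set.union_compl_self, h1, add_zero, Measure.restrict_apply MeasurableSet.univ,
        Set.univ_inter, Measure.restrict_apply hmeas] at h3
      exact h3
    exact lt_of_lt_of_le (pos_iff_ne_zero.mpr hA0) h2
  refine ⟨hS, ?_⟩
  -- the weighted measure ν and Jensen's inequality
  have hφf : ∀ᵐ x ∂μ.restrict A, φ (p₁ x / f x) (p₂ x / f x) = 1 :=
    hpos.mono fun x hx => (orlicz_spec _ _ (hp₁0 x) (hp₂0 x) hx).2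
  set f' : Ω → ℝ≥0 := fun x => (f x).toNNReal with hf'def
  have hf'm : Measurable f' := hfm.real_toNNReal
  set ν : Measure Ω := (μ.restrict A).withDensity (fun x => (f' x : ℝ≥0∞)) with hνdef
  have hcoe : ∀ x, ((f' x : ℝ)) = f x := fun x => Real.coe_toNNReal _ (hf0 x)
  have hνuniv : ν univ = ENNReal.ofReal S := by
    rw [hνdef, withDensity_apply _ MeasurableSet.univ, Measure.restrict_univ]
    exact (ofReal_integral_eq_lintegral_ofReal hfi (ae_of_all _ hf0)).symm
  haveI hν_fin : IsFiniteMeasure ν := ⟨by rw [hνuniv]; exact ENNReal.ofReal_lt_top⟩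
  haveI hν_ne : NeZero ν := ⟨Measure.measure_univ_ne_zero.mp
    (by rw [hνuniv]; exact (ENNReal.ofReal_pos.mpr hS).ne')⟩
  have hac : ν ≪ μ.restrict A := by
    rw [hνdef]; exact withDensity_absolutelyContinuous _ _
  set F : Ω → ℝ × ℝ := fun x => (p₁ x / f x, p₂ x / f x) with hFdef
  have hsmul : (fun x => (f' x : ℝ≥0) • F x) =ᵐ[μ.restrict A]
      fun x => ((p₁ x, p₂ x) : ℝ × ℝ) := by
    filter_upwards [hfposA] with x hx
    have hfx : f x ≠ 0 := hx.ne'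
    show (f' x : ℝ≥0) • ((p₁ x / f x, p₂ x / f x) : ℝ × ℝ) = (p₁ x, p₂ x)
    rw [Prod.smul_mk, NNReal.smul_def, NNReal.smul_def, hcoe x, smul_eq_mul, smul_eq_mul]
    rw [mul_div_cancel₀ _ hfx, mul_div_cancel₀ _ hfx]
  have hpairInt : Integrable (fun x => ((p₁ x, p₂ x) : ℝ × ℝ)) (μ.restrict A) :=
    hp₁i.integrableOn.prodMk hp₂i.integrableOn
  have hFi : Integrable F ν := by
    rw [hνdef, integrable_withDensity_iff_integrable_smul hf'm]
    exact hpairInt.congr hsmul.symm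
  have hFs : ∀ᵐ x ∂ν, F x ∈ Set.Ici (0:ℝ) ×ˢ Set.Ici (0:ℝ) :=
    ae_of_all _ fun x => ⟨div_nonneg (hp₁0 x) (hf0 x), div_nonneg (hp₂0 x) (hf0 x)⟩
  have hone : (fun x => φ (F x).1 (F x).2) =ᵐ[ν] fun _ => (1:ℝ) := hac.ae_le hφf
  have hgFi : Integrable (fun x => φ (F x).1 (F x).2) ν :=
    (integrable_const (1:ℝ)).congr hone.symm
  have jensen := hconc.le_map_average hc (isClosed_Ici.prod isClosed_Ici) hFs hFi hgFi
  have hLHS : ⨍ x, φ (F x).1 (F x).2 ∂ν = 1 := by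
    rw [average_congr hone, average_const]
  have hintF : ∫ x, F x ∂ν = (∫ x in A, p₁ x ∂μ, ∫ x in A, p₂ x ∂μ) := by
    rw [hνdef, integral_withDensity_eq_integral_smul hf'm, integral_congr_ae hsmul]
    exact integral_pair hp₁i.integrableOn hp₂i.integrableOn
  have havg : ⨍ x, F x ∂ν =
      ((∫ x in A, p₁ x ∂μ) / S, (∫ x in A, p₂ x ∂μ) / S) := by
    rw [average_eq, hintF, measureReal_def, hνuniv, ENNReal.toReal_ofReal hS.le, Prod.smul_mk,
      smul_eq_mul, smul_eq_mul, inv_mul_eq_div, inv_mul_eq_div]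
  calc (1 : ℝ) = ⨍ x, φ (F x).1 (F x).2 ∂ν := hLHS.symm
    _ ≤ φ ((∫ x in A, p₁ x ∂μ) / S) ((∫ x in A, p₂ x ∂μ) / S) := by
        have := jensen
        rw [havg] at this
        exact this
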